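/- With α = arccos(1/(2√3)) − π/6 and β = α + π/3, and u a unit vector in ℝ², the seven vectors u, r_α(u), r_{−α}(u), r_β(u), r_{−β}(u), r_α(u) − r_β(u), and r_{−α}(u) − r_{−β}(u) all have Euclidean norm 1. -/

import Mathlib

noncomputable def rot (θ : ℝ) (u : ℂ) : ℂ := Complex.exp (θ * Complex.I) * u
noncomputable def angA : ℝ := Real.arccos (1 / (2 * Real.sqrt 3)) - Real.pi / 6
noncomputable def angB : ℝ := angA + Real.pi / 3

lemma norm_rot (θ : ℝ) (u : ℂ) (hu : ‖u‖ = 1) : ‖rot θ u‖ = 1 := by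
  simp [rot, norm_mul, hu, Complex.norm_exp_ofReal_mul_I]

lemma norm_exp_sub (a b : ℝ) (h : Real.cos (b - a) = 1/2) :
    ‖Complex.exp (a * Complex.I) - Complex.exp (b * Complex.I)‖ = 1 := by
  set z := Complex.exp (a * Complex.I) - Complex.exp (b * Complex.I)
  have hsq : ‖z‖ ^ 2 = 1 := by
    rw [Complex.sq_norm, Complex.normSq_apply]
    have hre : z.re = Real.cos a - Real.cos b := by
      simp [z, Complex.sub_re, Complex.exp_ofReal_mul_I_re]
    have him : z.im = Real.sin a - Real.sin b := by
      simp [z, Complex.sub_im, Complex.exp_ofReal_mul_I_im]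
    rw [hre, him]
    have h2 := Real.cos_sub b a
    have ha := Real.sin_sq_add_cos_sq a
    have hb := Real.sin_sq_add_cos_sq b
    nlinarith [h2, ha, hb, h]
  nlinarith [norm_nonneg z, hsq]

lemma norm_rot_sub (a b : ℝ) (u : ℂ) (hu : ‖u‖ = 1)
    (h : Real.cos (b - a) = 1/2) : ‖rot a u - rot b u‖ = 1 := by
  have : rot a u - rot b u = (Complex.exp (a * Complex.I) - Complex.exp (b * Complex.I)) * u := by
    simp [rot]; ring
  rw [this, norm_mul, hu, mul_one, norm_exp_sub a b h]

theorem stmt1 (u : ℂ) (hu : ‖u‖ = 1) :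
    ‖u‖ = 1 ∧ ‖rot angA u‖ = 1 ∧ ‖rot (-angA) u‖ = 1 ∧ ‖rot angB u‖ = 1 ∧
    ‖rot (-angB) u‖ = 1 ∧ ‖rot angA u - rot angB u‖ = 1 ∧
    ‖rot (-angA) u - rot (-angB) u‖ = 1 := by
  have h1 : (angB : ℝ) - angA = Real.pi / 3 := by simp [angB]
  have h2 : (-angB : ℝ) - (-angA) = -(Real.pi / 3) := by simp [angB]
  refine ⟨hu, norm_rot _ _ hu, norm_rot _ _ hu, norm_rot _ _ hu, norm_rot _ _ hu, ?_, ?_⟩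
  · exact norm_rot_sub _ _ _ hu (by rw [h1, Real.cos_pi_div_three])
  · exact norm_rot_sub _ _ _ hu (by rw [h2]; simp [Real.cos_pi_div_three])
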